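/- Let Γ = A*_φ. If C_{-1} is a proper subgroup of A or C_{+1} is a proper subgroup of A, then the center of Γ equals Z(A) ∩ Fix φ. -/

import Mathlib

/-!
Internal characterization of the HNN extension `Γ = A*_φ`:
`A` is a subgroup of `Γ`, `t ∈ Γ` is the stable letter, `Cm = C_{-1}` and
`Cp = C_{+1}` are subgroups of `A` with `t⁻¹ Cm t = Cp` (so
`φ(c) = t⁻¹ c t` for `c ∈ Cm`), `A ∪ {t}` generates `Γ`, and Britton's lemma
holds: a reduced word `g₀ t^{ε₁} g₁ ⋯ t^{εₙ} gₙ` with `n ≥ 1` is nontrivial.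
-/

variable {Γ : Type*} [Group Γ]

/-- The subgroup `C_ε` : `C_{+1} = Cp` when `ε = 1`, and `C_{-1} = Cm`
otherwise. -/
def toCsub (Cm Cp : Subgroup Γ) (ε : ℤ) : Subgroup Γ := if ε = 1 then Cp else Cm

/-- The pair `(g₀, [(ε₁, g₁), …, (εₙ, gₙ)])` encodes the word
`g₀ t^{ε₁} g₁ ⋯ t^{εₙ} gₙ`; it is reduced when all `gᵢ ∈ A`, all `εᵢ = ±1`,
and it contains no pinch `t^{εᵢ} gᵢ t^{-εᵢ}` with `gᵢ ∈ C_{εᵢ}`. -/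
def HNNReducedWord (A Cm Cp : Subgroup Γ) (g₀ : Γ) (w : List (ℤ × Γ)) : Prop :=
  g₀ ∈ A ∧ (∀ p ∈ w, (p.1 = 1 ∨ p.1 = -1) ∧ p.2 ∈ A) ∧
    w.Chain' fun p q => q.1 = -p.1 → p.2 ∉ toCsub Cm Cp p.1

/-- The element of `Γ` represented by the word
`g₀ t^{ε₁} g₁ ⋯ t^{εₙ} gₙ`. -/
def hnnProd (t g₀ : Γ) (w : List (ℤ × Γ)) : Γ :=
  g₀ * (w.map fun p => t ^ p.1 * p.2).prod

/-- `Γ` is the HNN extension of its subgroup `A` relative to the isomorphism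
`φ : Cm → Cp`, `φ(c) = t⁻¹ c t`, with stable letter `t`. -/
def IsHNN (A Cm Cp : Subgroup Γ) (t : Γ) : Prop :=
  Cm ≤ A ∧ Cp ≤ A ∧ (∀ c : Γ, c ∈ Cm ↔ t⁻¹ * c * t ∈ Cp) ∧
    Subgroup.closure ((A : Set Γ) ∪ {t}) = ⊤ ∧
    ∀ g₀ w, HNNReducedWord A Cm Cp g₀ w → w ≠ [] → hnnProd t g₀ w ≠ 1

/-- `g` is cyclically reduced: `g ∈ A` (length 1), or `g` has a reduced form
`g₁ t^{ε₁} g₂ ⋯ gₙ t^{εₙ} gₙ₊₁` with `gₙ₊₁ = 1` and either `n = 1` or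
`t^{εₙ} g₁ t^{ε₁}` is not a pinch. -/
def HNNCyclicallyReduced (A Cm Cp : Subgroup Γ) (t g : Γ) : Prop :=
  g ∈ A ∨
    ∃ g₀ w, HNNReducedWord A Cm Cp g₀ w ∧ hnnProd t g₀ w = g ∧
      ∃ p q, w.head? = some q ∧ w.getLast? = some p ∧ p.2 = 1 ∧
        (w.length = 1 ∨ ¬(q.1 = -p.1 ∧ g₀ ∈ toCsub Cm Cp p.1))

namespace HNNaux

variable {A Cm Cp : Subgroup Γ} {t : Γ}

lemma hnnProd_nil (t g₀ : Γ) : hnnProd t g₀ [] = g₀ := by simp [hnnProd]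

lemma hnnProd_cons (t g₀ : Γ) (p : ℤ × Γ) (w : List (ℤ × Γ)) :
    hnnProd t g₀ (p :: w) = g₀ * t ^ p.1 * hnnProd t p.2 w := by
  simp [hnnProd, mul_assoc]

lemma hnnProd_append (t g₀ : Γ) (w₁ w₂ : List (ℤ × Γ)) :
    hnnProd t g₀ (w₁ ++ w₂) =
      hnnProd t g₀ w₁ * (w₂.map fun p => t ^ p.1 * p.2).prod := by
  simp [hnnProd, mul_assoc]

lemma hnnProd_concat (t g₀ : Γ) (w : List (ℤ × Γ)) (p : ℤ × Γ) :
    hnnProd t g₀ (w ++ [p]) = hnnProd t g₀ w * t ^ p.1 * p.2 := by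
  simp [hnnProd_append, mul_assoc]

lemma hnnProd_mul_left (t a g₀ : Γ) (w : List (ℤ × Γ)) :
    hnnProd t (a * g₀) w = a * hnnProd t g₀ w := by
  simp [hnnProd, mul_assoc]

lemma toCsub_le (hCm : Cm ≤ A) (hCp : Cp ≤ A) (ε : ℤ) : toCsub Cm Cp ε ≤ A := by
  unfold toCsub; split <;> assumption

lemma pinch (hH : IsHNN A Cm Cp t) {ε : ℤ} (hε : ε = 1 ∨ ε = -1) {c : Γ}
    (hc : c ∈ toCsub Cm Cp ε) : t ^ ε * c * t ^ (-ε) ∈ toCsub Cm Cp (-ε) := by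
  obtain ⟨-, -, hiff, -, -⟩ := hH
  rcases hε with rfl | rfl
  · simp only [toCsub, if_pos rfl] at hc
    simp only [toCsub, if_neg (by decide : (-1 : ℤ) ≠ 1), zpow_one, zpow_neg_one]
    rw [hiff]
    have h : t⁻¹ * (t * c * t⁻¹) * t = c := by group
    rw [h]; exact hc
  · simp only [toCsub, if_neg (by decide : (-1 : ℤ) ≠ 1)] at hc
    simp only [toCsub, neg_neg, if_pos rfl, zpow_neg_one, zpow_one]
    exact (hiff c).1 hc



lemma reduced_mul_mem (h : HNNReducedWord A Cm Cp g₀ w) {a : Γ} (ha : a ∈ A) :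
    ∃ g₀' w', HNNReducedWord A Cm Cp g₀' w' ∧
      hnnProd t g₀' w' = hnnProd t g₀ w * a ∧ w'.length = w.length := by
  obtain ⟨h0, h1, h2⟩ := h
  rcases List.eq_nil_or_concat w with rfl | ⟨u, p, rfl⟩
  · exact ⟨g₀ * a, [], ⟨mul_mem h0 ha, by simp, List.isChain_nil⟩,
      by simp [hnnProd_nil], rfl⟩
  simp only [List.concat_eq_append] at *
  refine ⟨g₀, u ++ [(p.1, p.2 * a)], ⟨h0, ?_, ?_⟩, ?_, by simp⟩
  · intro x hx
    rcases List.mem_append.mp hx with hx | hx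
    · exact h1 x (List.mem_append.mpr (Or.inl hx))
    · obtain ⟨hp1, hp2⟩ := h1 p (List.mem_append.mpr (Or.inr (by simp)))
      simp only [List.mem_singleton] at hx
      subst hx
      exact ⟨hp1, mul_mem hp2 ha⟩
  · rw [List.Chain', List.isChain_append] at h2 ⊢
    refine ⟨h2.1, List.isChain_singleton _, ?_⟩
    intro x hx y hy
    simp only [List.head?_cons, Option.mem_def, Option.some.injEq] at hy
    subst hy
    exact h2.2.2 x hx p (by simp)
  · simp [hnnProd_concat, mul_assoc]

lemma reduced_mul_t (hH : IsHNN A Cm Cp t) (h : HNNReducedWord A Cm Cp g₀ w)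
    {ε : ℤ} (hε : ε = 1 ∨ ε = -1) :
    ∃ g₀' w', HNNReducedWord A Cm Cp g₀' w' ∧
      hnnProd t g₀' w' = hnnProd t g₀ w * t ^ ε := by
  obtain ⟨h0, h1, h2⟩ := h
  rcases List.eq_nil_or_concat w with rfl | ⟨u, p, rfl⟩
  · refine ⟨g₀, [(ε, 1)], ⟨h0, ?_, List.isChain_singleton _⟩, by simp [hnnProd]⟩
    intro x hx
    simp only [List.mem_singleton] at hx
    subst hx
    exact ⟨hε, one_mem _⟩
  simp only [List.concat_eq_append] at *
  by_cases hc : ε = -p.1 ∧ p.2 ∈ toCsub Cm Cp p.1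
  · -- pinch: absorb
    obtain ⟨rfl, hmem⟩ := hc
    have hp1 : p.1 = 1 ∨ p.1 = -1 := (h1 p (by simp)).1
    have hcA : t ^ p.1 * p.2 * t ^ (-p.1) ∈ A :=
      toCsub_le hH.1 hH.2.1 _ (pinch hH hp1 hmem)
    have hredu : HNNReducedWord A Cm Cp g₀ u :=
      ⟨h0, fun x hx => h1 x (List.mem_append.mpr (Or.inl hx)),
        (List.isChain_append.mp h2).1⟩
    obtain ⟨g₀', w', hred', hprod', -⟩ := reduced_mul_mem (t := t) hredu hcA
    refine ⟨g₀', w', hred', ?_⟩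
    rw [hprod', hnnProd_concat]
    group
  · refine ⟨g₀, (u ++ [p]) ++ [(ε, 1)], ⟨h0, ?_, ?_⟩,
      by rw [hnnProd_concat]; simp⟩
    · intro x hx
      rcases List.mem_append.mp hx with hx | hx
      · exact h1 x hx
      · simp only [List.mem_singleton] at hx
        subst hx
        exact ⟨hε, one_mem _⟩
    · rw [List.Chain', List.isChain_append]
      refine ⟨h2, List.isChain_singleton _, ?_⟩
      intro x hx y hy
      simp only [List.head?_cons, Option.mem_def, Option.some.injEq] at hy
      subst hy
      rw [List.getLast?_concat] at hx
      simp only [Option.mem_def, Option.some.injEq] at hx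
      subst hx
      intro h1' h2'
      exact hc ⟨h1', h2'⟩

lemma exists_reduced (hH : IsHNN A Cm Cp t) (g : Γ) :
    ∃ g₀ w, HNNReducedWord A Cm Cp g₀ w ∧ hnnProd t g₀ w = g := by
  have hg : g ∈ Subgroup.closure ((A : Set Γ) ∪ {t}) := by
    rw [hH.2.2.2.1]; trivial
  have hg' : g ∈ Submonoid.closure (((A : Set Γ) ∪ {t}) ∪ ((A : Set Γ) ∪ {t})⁻¹) := by
    rw [← Subgroup.closure_toSubmonoid]; exact hg
  obtain ⟨l, hl, rfl⟩ := Submonoid.exists_list_of_mem_closure hg'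
  clear hg hg'
  induction l using List.reverseRecOn with
  | nil => exact ⟨1, [], ⟨one_mem _, by simp, List.isChain_nil⟩, by simp [hnnProd_nil]⟩
  | append_singleton l y ih =>
    obtain ⟨g₀, w, hred, hprod⟩ := ih (fun z hz => hl z (by simp [hz]))
    rw [List.prod_append, List.prod_singleton, ← hprod]
    have hy := hl y (by simp)
    simp only [Set.mem_union, Set.mem_inv, Set.mem_singleton_iff, SetLike.mem_coe] at hy
    rcases hy with (hy | rfl) | (hy | hy)
    · obtain ⟨g₀', w', h1, h2, -⟩ := reduced_mul_mem (t := t) hred hy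
      exact ⟨g₀', w', h1, h2⟩
    · obtain ⟨g₀', w', h1, h2⟩ := reduced_mul_t hH hred (Or.inl rfl : (1:ℤ) = 1 ∨ (1:ℤ) = -1)
      exact ⟨g₀', w', h1, by rw [h2, zpow_one]⟩
    · obtain ⟨g₀', w', h1, h2, -⟩ := reduced_mul_mem (t := t) hred ((inv_mem_iff).mp hy)
      exact ⟨g₀', w', h1, h2⟩
    · obtain ⟨g₀', w', h1, h2⟩ := reduced_mul_t hH hred (Or.inr rfl : (-1:ℤ) = 1 ∨ (-1:ℤ) = -1)
      refine ⟨g₀', w', h1, ?_⟩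
      rw [h2, zpow_neg_one, ← hy, inv_inv]


lemma reduced_not_mem (hH : IsHNN A Cm Cp t) (h : HNNReducedWord A Cm Cp g₀ w)
    (hw : w ≠ []) : hnnProd t g₀ w ∉ A := by
  intro hmem
  rcases List.eq_nil_or_concat w with rfl | ⟨u, p, rfl⟩
  · exact hw rfl
  simp only [List.concat_eq_append] at *
  obtain ⟨h0, h1, h2⟩ := h
  set z := hnnProd t g₀ (u ++ [p]) with hz
  have hred : HNNReducedWord A Cm Cp g₀ (u ++ [(p.1, p.2 * z⁻¹)]) := by
    refine ⟨h0, ?_, ?_⟩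
    · intro x hx
      rcases List.mem_append.mp hx with hx | hx
      · exact h1 x (List.mem_append.mpr (Or.inl hx))
      · obtain ⟨hp1, hp2⟩ := h1 p (List.mem_append.mpr (Or.inr (by simp)))
        simp only [List.mem_singleton] at hx
        subst hx
        exact ⟨hp1, mul_mem hp2 (inv_mem hmem)⟩
    · rw [List.Chain', List.isChain_append] at h2 ⊢
      refine ⟨h2.1, List.isChain_singleton _, ?_⟩
      intro x hx y hy
      simp only [List.head?_cons, Option.mem_def, Option.some.injEq] at hy
      subst hy
      exact h2.2.2 x hx p (by simp)
  refine hH.2.2.2.2 g₀ _ hred (by simp) ?_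
  rw [hnnProd_concat]
  have : hnnProd t g₀ u * t ^ p.1 * p.2 = z := by rw [hz, hnnProd_concat]
  rw [← mul_assoc, this, mul_inv_cancel]

lemma inv_red (hH : IsHNN A Cm Cp t) :
    ∀ (w : List (ℤ × Γ)) (g₀ : Γ), HNNReducedWord A Cm Cp g₀ w →
    ∃ g₀' w', HNNReducedWord A Cm Cp g₀' w' ∧
      hnnProd t g₀' w' = (hnnProd t g₀ w)⁻¹ ∧ w'.length = w.length ∧
      ∀ q, w.head? = some q → w'.getLast? = some (-q.1, g₀⁻¹) := by
  intro w
  induction w with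
  | nil =>
    intro g₀ h
    exact ⟨g₀⁻¹, [], ⟨inv_mem h.1, by simp, List.isChain_nil⟩,
      by simp [hnnProd_nil], rfl, by simp⟩
  | cons p rest ih =>
    intro g₀ h
    obtain ⟨h0, h1, h2⟩ := h
    have hp := h1 p (by simp)
    have hrest : HNNReducedWord A Cm Cp p.2 rest :=
      ⟨hp.2, fun x hx => h1 x (by simp [hx]), h2.tail⟩
    obtain ⟨g₀', w', ⟨k0, k1, k2⟩, hprod', hlen', hlast'⟩ := ih p.2 hrest
    refine ⟨g₀', w' ++ [(-p.1, g₀⁻¹)], ⟨k0, ?_, ?_⟩, ?_, by simp [hlen'], ?_⟩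
    · intro x hx
      rcases List.mem_append.mp hx with hx | hx
      · exact k1 x hx
      · simp only [List.mem_singleton] at hx
        subst hx
        refine ⟨?_, inv_mem h0⟩
        rcases hp.1 with h' | h'
        · exact Or.inr (by rw [h'])
        · exact Or.inl (by rw [h']; ring)
    · rw [List.Chain', List.isChain_append]
      refine ⟨k2, List.isChain_singleton _, ?_⟩
      intro x hx y hy
      simp only [List.head?_cons, Option.mem_def, Option.some.injEq] at hy
      subst hy
      cases rest with
      | nil =>
        have : w' = [] := List.length_eq_zero_iff.mp (by simp [hlen'])
        subst this
        simp at hx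
      | cons q rest' =>
        have hx' := hlast' q rfl
        rw [hx'] at hx
        simp only [Option.mem_def, Option.some.injEq] at hx
        subst hx
        simp only
        intro he
        have hq1 : q.1 = -p.1 := by omega
        have hnp : p.2 ∉ toCsub Cm Cp p.1 := (List.isChain_cons_cons.mp h2).1 hq1
        have hq1' : -q.1 = p.1 := by omega
        rw [hq1']
        intro hc
        exact hnp ((inv_mem_iff).mp hc)
    · rw [hnnProd_concat, hprod', hnnProd_cons]
      group
    · intro q hq
      simp only [List.head?_cons, Option.some.injEq] at hq
      subst hq
      exact List.getLast?_concat

lemma last_full (hH : IsHNN A Cm Cp t) {g₀ : Γ} {u : List (ℤ × Γ)} {p : ℤ × Γ}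
    (h : HNNReducedWord A Cm Cp g₀ (u ++ [p])) {z : Γ}
    (hz : hnnProd t g₀ (u ++ [p]) = z) (hcom : ∀ a ∈ A, z * a = a * z) :
    toCsub Cm Cp p.1 = A := by
  by_contra hne
  have hle : toCsub Cm Cp p.1 ≤ A := toCsub_le hH.1 hH.2.1 _
  obtain ⟨y, hyA, hyC⟩ := SetLike.exists_of_lt (lt_of_le_of_ne hle hne)
  obtain ⟨g₀', w', hred', hprod', hlen', -⟩ := inv_red hH _ _ h
  obtain ⟨h0, h1, h2⟩ := h
  have hp2 : p.2 ∈ A := (h1 p (by simp)).2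
  set a : Γ := p.2⁻¹ * y * g₀'⁻¹ with ha
  have haA : a ∈ A := mul_mem (mul_mem (inv_mem hp2) hyA) (inv_mem hred'.1)
  -- the word for z * a * z⁻¹
  have hredW : HNNReducedWord A Cm Cp g₀ (u ++ ((p.1, y) :: w')) := by
    refine ⟨h0, ?_, ?_⟩
    · intro x hx
      rcases List.mem_append.mp hx with hx | hx
      · exact h1 x (List.mem_append.mpr (Or.inl hx))
      · rcases List.mem_cons.mp hx with hx | hx
        · subst hx
          exact ⟨(h1 p (by simp)).1, hyA⟩
        · exact hred'.2.1 x hx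
    · rw [List.Chain', List.isChain_append] at h2 ⊢
      refine ⟨h2.1, ?_, ?_⟩
      · rw [List.isChain_cons]
        refine ⟨?_, hred'.2.2⟩
        intro b hb h' hc
        exact hyC hc
      · intro x hx b hb
        simp only [List.head?_cons, Option.mem_def, Option.some.injEq] at hb
        subst hb
        exact h2.2.2 x hx p (by simp)
  have hprodW : hnnProd t g₀ (u ++ ((p.1, y) :: w')) = a := by
    rw [hz] at hprod'
    have e1 : (w'.map fun q => t ^ q.1 * q.2).prod = g₀'⁻¹ * z⁻¹ := by
      have : g₀' * (w'.map fun q => t ^ q.1 * q.2).prod = z⁻¹ := by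
        rw [← hprod', hnnProd]
      rw [← this]; group
    have e2 : hnnProd t g₀ u * t ^ p.1 * p.2 = z := by rw [← hz, hnnProd_concat]
    rw [hnnProd_append, List.map_cons, List.prod_cons, e1]
    have hcomm := hcom a haA
    calc hnnProd t g₀ u * (t ^ p.1 * y * (g₀'⁻¹ * z⁻¹))
        = (hnnProd t g₀ u * t ^ p.1 * p.2) * (p.2⁻¹ * y * g₀'⁻¹) * z⁻¹ := by group
      _ = z * a * z⁻¹ := by rw [e2, ha]
      _ = a * z * z⁻¹ := by rw [hcomm]
      _ = a := by group
  exact reduced_not_mem hH hredW (by simp) (hprodW ▸ haA)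


lemma central_mem (hH : IsHNN A Cm Cp t) (hproper : Cm ≠ A ∨ Cp ≠ A) :
    ∀ (n : ℕ) (w : List (ℤ × Γ)) (g₀ : Γ), w.length ≤ n →
      HNNReducedWord A Cm Cp g₀ w →
      (∀ x : Γ, x * hnnProd t g₀ w = hnnProd t g₀ w * x) →
      hnnProd t g₀ w ∈ A := by
  intro n
  induction n with
  | zero =>
    intro w g₀ hlen h _
    have hw : w = [] := List.length_eq_zero_iff.mp (Nat.le_zero.mp hlen)
    subst hw
    rw [hnnProd_nil]
    exact h.1
  | succ n ih =>
    intro w g₀ hlen h hcom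
    cases w with
    | nil => rw [hnnProd_nil]; exact h.1
    | cons q v =>
      set z := hnnProd t g₀ (q :: v) with hzdef
      have hcom' : ∀ a ∈ A, z * a = a * z := fun a _ => (hcom a).symm
      have hzinv : ∀ x : Γ, x * z⁻¹ = z⁻¹ * x := by
        intro x
        have h' := hcom x
        rw [mul_inv_eq_iff_eq_mul, mul_assoc, h', ← mul_assoc, inv_mul_cancel, one_mul]
      have hcominv : ∀ a ∈ A, z⁻¹ * a = a * z⁻¹ := fun a _ => (hzinv a).symm
      have hq1 : q.1 = 1 ∨ q.1 = -1 := (h.2.1 q (by simp)).1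
      -- the inverse word and its last letter
      obtain ⟨g₀', w', hred', hprod', hlen', hlast'⟩ := inv_red hH _ _ h
      have hlast'' := hlast' q rfl
      rcases List.eq_nil_or_concat w' with rfl | ⟨u', p'', rfl⟩
      · simp at hlast''
      simp only [List.concat_eq_append] at hred' hprod' hlen' hlast''
      have hp'' : p'' = (-q.1, g₀⁻¹) := by
        rw [List.getLast?_concat] at hlast''
        exact Option.some.inj hlast''
      have h2full : toCsub Cm Cp (-q.1) = A := by
        have := last_full hH hred' hprod' hcominv
        rw [hp''] at this
        exact this
      rcases List.eq_nil_or_concat v with rfl | ⟨u₂, p, rfl⟩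
      · -- w = [q]
        have h1full : toCsub Cm Cp q.1 = A :=
          last_full hH (u := []) (p := q) h hzdef.symm hcom'
        rcases hq1 with hq | hq <;> rw [hq] at h1full h2full <;>
          simp only [toCsub, if_pos rfl, if_neg (by decide : (-1 : ℤ) ≠ 1),
            neg_neg] at h1full h2full <;>
          rcases hproper with hpr | hpr <;> exact absurd (by assumption) hpr
      · -- w = q :: (u₂ ++ [p])
        simp only [List.concat_eq_append] at *
        have h1full : toCsub Cm Cp p.1 = A :=
          last_full hH (u := q :: u₂) (p := p) h hzdef.symm hcom'
        have hp1 : p.1 = 1 ∨ p.1 = -1 := (h.2.1 p (by simp)).1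
        by_cases hpq : p.1 = -q.1
        · -- descent: strip the first and last letters
          have hqp : q.1 = -p.1 := by omega
          have hg0m : g₀ ∈ toCsub Cm Cp (-q.1) := by rw [h2full]; exact h.1
          have hp2m : p.2 ∈ toCsub Cm Cp p.1 := by
            rw [h1full]; exact (h.2.1 p (by simp)).2
          have hεm : -q.1 = 1 ∨ -q.1 = -1 := by omega
          set c : Γ := t ^ (-q.1) * g₀ * t ^ q.1 with hc
          have hcA : c ∈ A := by
            have := pinch hH hεm hg0m
            rw [neg_neg] at this
            exact toCsub_le hH.1 hH.2.1 _ this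
          set c' : Γ := t ^ p.1 * p.2 * t ^ (-p.1) with hc'
          have hc'A : c' ∈ A := toCsub_le hH.1 hH.2.1 _ (pinch hH hp1 hp2m)
          have hzz : t ^ (-q.1) * z * t ^ q.1 = z := by
            have h' := hcom (t ^ q.1)
            calc t ^ (-q.1) * z * t ^ q.1 = t ^ (-q.1) * (z * t ^ q.1) := by group
              _ = t ^ (-q.1) * (t ^ q.1 * z) := by rw [← h']
              _ = z := by group
          have hkey : hnnProd t (c * q.2) u₂ * c' = z := by
            rw [hnnProd_mul_left]
            have hexp : z = g₀ * t ^ q.1 * (hnnProd t q.2 u₂ * t ^ p.1 * p.2) := by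
              rw [hzdef, hnnProd_cons, hnnProd_concat]
            calc c * hnnProd t q.2 u₂ * c'
                = t ^ (-q.1) * (g₀ * t ^ q.1 * (hnnProd t q.2 u₂ * t ^ p.1 * p.2))
                    * t ^ (-p.1) := by rw [hc, hc']; group
              _ = t ^ (-q.1) * z * t ^ q.1 := by rw [← hexp, hqp]
              _ = z := hzz
          have hredm : HNNReducedWord A Cm Cp (c * q.2) u₂ := by
            refine ⟨mul_mem hcA (h.2.1 q (by simp)).2, ?_, ?_⟩
            · intro x hx
              exact h.2.1 x (by simp [hx])
            · have := h.2.2.tail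
              simp only [List.tail_cons] at this
              exact (List.isChain_append.mp this).1
          obtain ⟨g₀'', w'', hred'', hprod'', hlen''⟩ := reduced_mul_mem (t := t) hredm hc'A
          have hz2 : hnnProd t g₀'' w'' = z := by rw [hprod'', hkey]
          have hln : w''.length ≤ n := by
            rw [hlen'']
            have := hlen
            simp only [List.length_cons, List.length_append] at this ⊢
            omega
          have := ih w'' g₀'' hln hred'' (by rw [hz2]; exact hcom)
          rwa [hz2] at this
        · -- both inclusions are full : contradiction with properness
          have e1 : toCsub Cm Cp 1 = A ∧ toCsub Cm Cp (-1) = A := by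
            rcases hp1 with hp | hp <;> rcases hq1 with hq | hq <;>
              rw [hp] at h1full <;> rw [hq] at h2full <;>
              first
                | exact absurd (by omega : p.1 = -q.1) hpq
                | (constructor <;> assumption)
          have e2 : Cp = A := by
            have := e1.1; rwa [toCsub, if_pos rfl] at this
          have e3 : Cm = A := by
            have := e1.2; rwa [toCsub, if_neg (by decide : (-1 : ℤ) ≠ 1)] at this
          rcases hproper with hpr | hpr
          · exact absurd e3 hpr
          · exact absurd e2 hpr


end HNNaux

/-- Center of an HNN extension, case (i): if `C_{-1}` or `C_{+1}` is a proper
subgroup of `A`, the center of `Γ` is `Z(A) ∩ Fix φ`, where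
`Fix φ = {c ∈ C_{-1} ∩ C_{+1} | φ(c) = t⁻¹ c t = c}`. -/
theorem hnn_center_proper (A Cm Cp : Subgroup Γ) (t : Γ)
    (hH : IsHNN A Cm Cp t) (hproper : Cm ≠ A ∨ Cp ≠ A) :
    (Subgroup.center Γ : Set Γ) =
      {g : Γ | (g ∈ A ∧ ∀ a ∈ A, g * a = a * g) ∧
        g ∈ Cm ∧ g ∈ Cp ∧ t⁻¹ * g * t = g} := by
  ext g
  simp only [SetLike.mem_coe, Set.mem_setOf_eq]
  constructor
  · intro hg
    have hcom : ∀ x : Γ, x * g = g * x := fun x => Subgroup.mem_center_iff.mp hg x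
    obtain ⟨g₀, w, hred, hprod⟩ := HNNaux.exists_reduced hH g
    have hgA : g ∈ A := by
      rw [← hprod]
      exact HNNaux.central_mem hH hproper w.length w g₀ le_rfl hred
        (by rw [hprod]; exact hcom)
    have hcomA : ∀ a ∈ A, g * a = a * g := fun a _ => (hcom a).symm
    have htg : t⁻¹ * g * t = g := by
      have h' := hcom t
      rw [mul_assoc, ← h', ← mul_assoc, inv_mul_cancel, one_mul]
    have hgCm : g ∈ Cm := by
      by_contra hnot
      have hred2 : HNNReducedWord A Cm Cp 1 [(-1, g), (1, g⁻¹)] := by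
        refine ⟨one_mem _, ?_, ?_⟩
        · intro x hx
          rcases List.mem_cons.mp hx with hx | hx
          · subst hx; exact ⟨Or.inr rfl, hgA⟩
          · simp only [List.mem_singleton] at hx
            subst hx; exact ⟨Or.inl rfl, inv_mem hgA⟩
        · rw [List.Chain', List.isChain_cons_cons]
          refine ⟨?_, List.isChain_singleton _⟩
          intro _
          simp only [toCsub, if_neg (by decide : (-1 : ℤ) ≠ 1)]
          exact hnot
      refine hH.2.2.2.2 1 [(-1, g), (1, g⁻¹)] hred2 (by simp) ?_
      have e : hnnProd t 1 [(-1, g), (1, g⁻¹)] = t⁻¹ * (g * (t * g⁻¹)) := by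
        simp [hnnProd, mul_assoc]
      rw [e, ← mul_assoc, ← mul_assoc, htg, mul_inv_cancel]
    have hgCp : g ∈ Cp := by
      rw [← htg]
      exact (hH.2.2.1 g).mp hgCm
    exact ⟨⟨hgA, hcomA⟩, hgCm, hgCp, htg⟩
  · rintro ⟨⟨hgA, hcomA⟩, hgCm, hgCp, htg⟩
    rw [Subgroup.mem_center_iff]
    intro x
    have hx : x ∈ Subgroup.closure ((A : Set Γ) ∪ {t}) := by
      rw [hH.2.2.2.1]; trivial
    refine Subgroup.closure_induction (p := fun y _ => y * g = g * y) ?_ ?_ ?_ ?_ hx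
    · intro y hy
      rcases hy with hy | hy
      · exact (hcomA y hy).symm
    
      · simp only [Set.mem_singleton_iff] at hy
        rw [hy]
        have h2 : t * (t⁻¹ * g * t) = g * t := by group
        rw [htg] at h2
        exact h2
    · simp
    · intro a b _ _ iha ihb
      rw [mul_assoc, ihb, ← mul_assoc, iha, mul_assoc]
    · intro a _ iha
      rw [inv_mul_eq_iff_eq_mul, ← mul_assoc, iha, mul_assoc, mul_inv_cancel, mul_one]
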